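/- Suppose n ≡ 2 (mod 4). For distinct i,j in {0,...,n}, let γ_{ij} be the complete graph on the vertex set {0,...,n} \ {i,j}. Then each γ_{0j} lies in K (it has all degrees even and an even number of edges), and the map Φ sending x_j to (γ_{0j}, (0 j)) extends the defining relations: Φ(x_i)² = 1, (Φ(x_i)Φ(x_j))³ = 1, and (Φ(x_i)Φ(x_j)Φ(x_i)Φ(x_k))² equals the 4-cycle graph on 0,i,k,j (with identity permutation), for all distinct i,j,k in {1,...,n}. -/

import Mathlib

open Equiv Finset

abbrev Vtx (n : ℕ) := Fin (n+1)
abbrev Edge (n : ℕ) := {e : Sym2 (Vtx n) // ¬ e.IsDiag}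
abbrev Graphs (n : ℕ) := Edge n → ZMod 2

/-- relabelling of edges by a permutation of vertices -/
def permEdge {n : ℕ} (σ : Perm (Vtx n)) : Edge n ≃ Edge n where
  toFun e := ⟨Sym2.map σ e.1, by
    simpa [Sym2.isDiag_map σ.injective] using e.2⟩
  invFun e := ⟨Sym2.map σ.symm e.1, by
    simpa [Sym2.isDiag_map σ.symm.injective] using e.2⟩
  left_inv e := by
    ext1
    simp [Sym2.map_map]
  right_inv e := by
    ext1
    simp [Sym2.map_map]

/-- action of a vertex permutation on graphs -/
def gact {n : ℕ} (σ : Perm (Vtx n)) : Graphs n ≃+ Graphs n where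
  toFun g := fun e => g ((permEdge σ).symm e)
  invFun g := fun e => g (permEdge σ e)
  left_inv g := by funext e; simp
  right_inv g := by funext e; simp
  map_add' g h := rfl

lemma gact_mul {n : ℕ} (σ τ : Perm (Vtx n)) (g : Graphs n) :
    gact (σ * τ) g = gact σ (gact τ g) := by
  funext e
  simp only [gact, AddEquiv.coe_mk, Equiv.coe_fn_mk, Equiv.symm]
  congr 1
  ext1
  simp [permEdge, Sym2.map_map]
  rfl

/-- the action as a homomorphism to automorphisms, multiplicatively -/
def φn (n : ℕ) : Perm (Vtx n) →* MulAut (Multiplicative (Graphs n)) where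
  toFun σ := AddEquiv.toMultiplicative (gact σ)
  map_one' := by
    ext g
    simp [gact, permEdge]
    exact congrArg _ (Subtype.ext (by change Sym2.map id _ = _; simp))
  map_mul' σ τ := by
    ext g
    exact congrFun (gact_mul σ τ g.toAdd) _

/-- the ambient group `Graphs(n+1) ⋊ S_{n+1}` -/
abbrev DG (n : ℕ) := SemidirectProduct (Multiplicative (Graphs n)) (Perm (Vtx n)) (φn n)

/-- the single-edge graph with edge `{u,v}` -/
def single {n : ℕ} (u v : Vtx n) : Graphs n :=
  fun e => if e.1 = s(u, v) then 1 else 0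

/-- the generator `x_m = (e_{0m}, (0 m))` -/
def xgen {n : ℕ} (m : Vtx n) : DG n :=
  ⟨Multiplicative.ofAdd (single 0 m), Equiv.swap 0 m⟩

/-- the degree of a vertex in a graph -/
def deg {n : ℕ} (g : Graphs n) (v : Vtx n) : ℕ :=
  (Finset.univ.filter (fun e : Edge n => v ∈ e.1 ∧ g e = 1)).card

/-- the number of edges of a graph -/
def nedges {n : ℕ} (g : Graphs n) : ℕ :=
  (Finset.univ.filter (fun e : Edge n => g e = 1)).card

/-- all degrees even and an even number of edges -/
def evenGraph {n : ℕ} (g : Graphs n) : Prop :=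
  (∀ v : Vtx n, Even (deg g v)) ∧ Even (nedges g)

/-- the subgroup generated by the `x_m`, `m = 1, …, n` -/
def Dn (n : ℕ) : Subgroup (DG n) :=
  Subgroup.closure {x | ∃ m : Vtx n, m ≠ 0 ∧ x = xgen m}

/-- the complete graph -/
def complete (n : ℕ) : Graphs n := fun _ => 1
/-- the complete graph on the vertex set `{0,…,n} \ {0, j}` -/
def gammaG {n : ℕ} (j : Vtx n) : Graphs n :=
  fun e => if (0 : Vtx n) ∈ e.1 ∨ j ∈ e.1 then 0 else 1

/-- `Φ(x_j) = (γ_{0j}, (0 j))` -/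
def Phi {n : ℕ} (j : Vtx n) : DG n :=
  ⟨Multiplicative.ofAdd (gammaG j), Equiv.swap 0 j⟩

section Helpers

variable {n : ℕ}

lemma mem_map_iff (σ : Perm (Vtx n)) (a : Vtx n) (z : Sym2 (Vtx n)) :
    a ∈ Sym2.map (⇑σ) z ↔ σ.symm a ∈ z := by
  rw [Sym2.mem_map]
  constructor
  · rintro ⟨b, hb, rfl⟩; simpa using hb
  · intro h; exact ⟨σ.symm a, h, by simp⟩

/-- the complete graph avoiding `{a,b}` -/
def Gam (a b : Vtx n) : Graphs n := fun e => if a ∈ e.1 ∨ b ∈ e.1 then 0 else 1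

lemma gact_apply (σ : Perm (Vtx n)) (g : Graphs n) (e : Edge n) :
    gact σ g e = g ⟨Sym2.map (⇑σ.symm) e.1, by
      simpa [Sym2.isDiag_map σ.symm.injective] using e.2⟩ := rfl

lemma gact_Gam (σ : Perm (Vtx n)) (a b : Vtx n) :
    gact σ (Gam a b) = Gam (σ a) (σ b) := by
  funext e
  rw [gact_apply]
  simp only [Gam, mem_map_iff, Equiv.symm_symm]

lemma gact_add (σ : Perm (Vtx n)) (g h : Graphs n) :
    gact σ (g + h) = gact σ g + gact σ h := map_add (gact σ) g h

lemma Gam_comm (a b : Vtx n) : Gam a b = Gam b a := by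
  funext e; simp [Gam, or_comm]

lemma gr_add_self (g : Graphs n) : g + g = 0 := by
  funext e
  show g e + g e = 0
  exact CharTwo.add_self_eq_zero _

lemma PhiG (m : Vtx n) :
    Phi m = ⟨Multiplicative.ofAdd (Gam 0 m), Equiv.swap 0 m⟩ := rfl

lemma mk_mul (g h : Graphs n) (σ τ : Perm (Vtx n)) :
    (⟨Multiplicative.ofAdd g, σ⟩ * ⟨Multiplicative.ofAdd h, τ⟩ : DG n) =
      ⟨Multiplicative.ofAdd (g + gact σ h), σ * τ⟩ := by
  refine SemidirectProduct.ext ?_ rfl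
  show Multiplicative.ofAdd g * (φn n σ) (Multiplicative.ofAdd h) = _
  rfl

end Helpers
section Helpers2
variable {n : ℕ}

lemma single_apply (a b : Vtx n) (hab : a ≠ b) (e : Edge n) :
    single a b e = if a ∈ e.1 ∧ b ∈ e.1 then 1 else 0 := by
  by_cases h : a ∈ e.1 ∧ b ∈ e.1
  · rw [single, if_pos ((Sym2.mem_and_mem_iff hab).mp h), if_pos h]
  · rw [single, if_neg (fun he => h ((Sym2.mem_and_mem_iff hab).mpr he)), if_neg h]

lemma gam_eq_one_iff (a b : Vtx n) (e : Edge n) :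
    Gam a b e = 1 ↔ (a ∉ e.1 ∧ b ∉ e.1) := by
  simp only [Gam]
  split_ifs with h
  · constructor
    · intro h0; exact absurd h0 (by decide)
    · tauto
  · simp only [not_or] at h ⊢
    tauto

end Helpers2
section Helpers3
variable {n : ℕ}

lemma z3 (a b c : Graphs n) : a + b + (c + a) + (b + c) = 0 := by
  have h : ∀ x y z : ZMod 2, x + y + (z + x) + (y + z) = 0 := by decide
  funext e
  exact h (a e) (b e) (c e)

end Helpers3
section Helpers4
variable {n : ℕ}

lemma card_mem_edge (e : Edge n) :
    (Finset.univ.filter (fun v : Vtx n => v ∈ e.1)).card = 2 := by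
  obtain ⟨z, hz⟩ := e
  induction z using Sym2.ind with
  | _ x y =>
    rw [Sym2.mk_isDiag_iff] at hz
    have h : (Finset.univ.filter (fun v : Vtx n => v ∈ s(x, y))) = {x, y} := by
      ext v
      simp [Sym2.mem_iff]
    rw [h, Finset.card_pair hz]

lemma handshake (g : Graphs n) : ∑ v : Vtx n, deg g v = 2 * nedges g := by
  have h1 : ∀ v : Vtx n, deg g v =
      ∑ e ∈ Finset.univ.filter (fun e : Edge n => g e = 1), (if v ∈ e.1 then 1 else 0) := by
    intro v
    rw [← Finset.card_filter, Finset.filter_filter, deg]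
    congr 1
    apply Finset.filter_congr
    intro e _
    tauto
  calc ∑ v : Vtx n, deg g v
      = ∑ v : Vtx n, ∑ e ∈ Finset.univ.filter (fun e : Edge n => g e = 1),
          (if v ∈ e.1 then 1 else 0) := by
        exact Finset.sum_congr rfl fun v _ => h1 v
    _ = ∑ e ∈ Finset.univ.filter (fun e : Edge n => g e = 1),
          ∑ v : Vtx n, (if v ∈ e.1 then 1 else 0) := Finset.sum_comm
    _ = ∑ e ∈ Finset.univ.filter (fun e : Edge n => g e = 1), 2 := by
        refine Finset.sum_congr rfl fun e _ => ?_
        rw [← Finset.card_filter]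
        exact card_mem_edge e
    _ = 2 * nedges g := by
        rw [Finset.sum_const, smul_eq_mul, mul_comm, nedges]

lemma deg_gamma (j v : Vtx n) (hj : j ≠ 0) (hv0 : v ≠ 0) (hvj : v ≠ j) :
    deg (Gam 0 j) v = n - 2 := by
  have key : (Finset.univ \ {v, 0, j} : Finset (Vtx n)).card = deg (Gam 0 j) v := by
    apply Finset.card_bij (fun u hu =>
      (⟨s(v, u), by
        simp only [Finset.mem_sdiff, Finset.mem_insert, Finset.mem_singleton, not_or] at hu
        simp [Sym2.mk_isDiag_iff]
        exact fun h => hu.2.1 h.symm⟩ : Edge n))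
    · intro u hu
      simp only [Finset.mem_sdiff, Finset.mem_insert, Finset.mem_singleton, not_or] at hu
      simp only [Finset.mem_filter, Finset.mem_univ, true_and]
      constructor
      · exact Sym2.mem_mk_left v u
      · rw [gam_eq_one_iff]
        constructor
        · rw [Sym2.mem_iff]
          push_neg
          exact ⟨hv0.symm, (fun h => hu.2.2.1 h.symm)⟩
        · rw [Sym2.mem_iff]
          push_neg
          exact ⟨hvj.symm, (fun h => hu.2.2.2 h.symm)⟩
    · intro u₁ hu₁ u₂ hu₂ h
      simp only [Finset.mem_sdiff, Finset.mem_insert, Finset.mem_singleton, not_or] at hu₁ hu₂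
      have h2 : s(v, u₁) = s(v, u₂) := congrArg (fun e : Edge n => e.1) h
      rw [Sym2.eq_iff] at h2
      rcases h2 with ⟨-, h⟩ | ⟨-, h⟩
      · exact h
      · exact absurd h hu₁.2.1
    · intro e he
      simp only [Finset.mem_filter, Finset.mem_univ, true_and] at he
      obtain ⟨hv, hg⟩ := he
      rw [gam_eq_one_iff] at hg
      obtain ⟨u, hu⟩ := Sym2.mem_iff_exists.mp hv
      have hnd := e.2
      rw [hu, Sym2.mk_isDiag_iff] at hnd
      refine ⟨u, ?_, ?_⟩
      · simp only [Finset.mem_sdiff, Finset.mem_univ, Finset.mem_insert,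
          Finset.mem_singleton, not_or, true_and]
        refine ⟨fun h => hnd h.symm, fun h => hg.1 ?_, fun h => hg.2 ?_⟩
        · rw [hu, h]; exact Sym2.mem_mk_right v 0
        · rw [hu, h]; exact Sym2.mem_mk_right v j
      · exact Subtype.ext hu.symm
  rw [← key]
  rw [Finset.card_sdiff_of_subset (Finset.subset_univ _), Finset.card_univ, Fintype.card_fin]
  have hc : ({v, 0, j} : Finset (Vtx n)).card = 3 := by
    rw [Finset.card_insert_of_notMem (by simp [hv0, hvj]),
      Finset.card_insert_of_notMem (by simp [hj.symm]), Finset.card_singleton]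
  omega

lemma deg_gamma_zero (j v : Vtx n) (hv : v = 0 ∨ v = j) : deg (Gam 0 j) v = 0 := by
  rw [deg, Finset.card_eq_zero, Finset.filter_eq_empty_iff]
  rintro e -
  rintro ⟨hv', hg⟩
  rw [gam_eq_one_iff] at hg
  rcases hv with rfl | rfl
  · exact hg.1 hv'
  · exact hg.2 hv'

end Helpers4
lemma evenGamma (n : ℕ) (hn : n % 4 = 2) (j : Vtx n) (hj : j ≠ 0) : evenGraph (gammaG j) := by
  obtain ⟨q, rfl⟩ : ∃ q, n = 4 * q + 2 := ⟨n / 4, by omega⟩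
  have hgam : gammaG j = Gam 0 j := rfl
  constructor
  · intro v
    by_cases hv : v = 0 ∨ v = j
    · rw [hgam, deg_gamma_zero j v hv]; exact Even.zero
    · push_neg at hv
      rw [hgam, deg_gamma j v hj hv.1 hv.2]
      exact ⟨2 * q, by omega⟩
  · have hs := handshake (Gam 0 j)
    have h1 : ∑ v ∈ ({0, j} : Finset (Vtx (4*q+2))), deg (Gam 0 j) v = 0 := by
      apply Finset.sum_eq_zero
      intro v hv
      simp only [Finset.mem_insert, Finset.mem_singleton] at hv
      exact deg_gamma_zero j v hv
    have h2 : ∑ v ∈ (Finset.univ \ ({0, j} : Finset (Vtx (4*q+2)))), deg (Gam 0 j) v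
        = (4 * q + 1) * (4 * q) := by
      have hcongr : ∀ v ∈ Finset.univ \ ({0, j} : Finset (Vtx (4*q+2))),
          deg (Gam 0 j) v = 4 * q + 2 - 2 := by
        intro v hv
        simp only [Finset.mem_sdiff, Finset.mem_insert, Finset.mem_singleton, not_or,
          Finset.mem_univ, true_and] at hv
        exact deg_gamma j v hj hv.1 hv.2
      rw [Finset.sum_congr rfl hcongr, Finset.sum_const, smul_eq_mul,
        Finset.card_sdiff_of_subset (Finset.subset_univ _), Finset.card_univ, Fintype.card_fin,
        Finset.card_pair hj.symm]
      rw [show 4*q+2+1-2 = 4*q+1 from by omega, show 4*q+2-2 = 4*q from by omega]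
    have hd : ∑ v : Vtx (4*q+2), deg (Gam 0 j) v = (4 * q + 1) * (4 * q) := by
      rw [← Finset.sum_sdiff (Finset.subset_univ ({0, j} : Finset (Vtx (4*q+2)))), h1, h2, Nat.add_zero]
    rw [hs] at hd
    have hM : (4 * q + 1) * (4 * q) = 4 * (q * (4 * q + 1)) := by ring
    rw [hM] at hd
    rw [hgam]
    exact ⟨q * (4 * q + 1), by omega⟩

/-- For `n ≡ 2 (mod 4)`, each `γ_{0j}` lies in `K`, and the assignment
`x_j ↦ (γ_{0j}, (0 j))` satisfies the defining relations: squares, cubes of products,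
and `(Φ(x_i)Φ(x_j)Φ(x_i)Φ(x_k))²` equals the 4-cycle graph on `0, i, k, j` paired with
the identity permutation, for all distinct `i, j, k ∈ {1,…,n}`. -/
theorem stmt15 (n : ℕ) (hn : n % 4 = 2)
    (i j k : Vtx n) (hi : i ≠ 0) (hj : j ≠ 0) (hk : k ≠ 0)
    (hij : i ≠ j) (hik : i ≠ k) (hjk : j ≠ k) :
    evenGraph (gammaG j) ∧
    (Phi i) ^ 2 = 1 ∧
    (Phi i * Phi j) ^ 3 = 1 ∧
    (Phi i * Phi j * Phi i * Phi k) ^ 2 =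
      ⟨Multiplicative.ofAdd (single 0 i + single i k + single k j + single j 0), 1⟩ := by

  have h0i : (0 : Vtx n) ≠ i := hi.symm
  have h0j : (0 : Vtx n) ≠ j := hj.symm
  have h0k : (0 : Vtx n) ≠ k := hk.symm
  have hji : j ≠ i := hij.symm
  have hki : k ≠ i := hik.symm
  have hkj : k ≠ j := hjk.symm
  refine ⟨evenGamma n hn j hj, ?_, ?_, ?_⟩
  · rw [pow_two, PhiG, mk_mul, gact_Gam, Equiv.swap_apply_left, Equiv.swap_apply_right,
      Gam_comm i 0, gr_add_self, Equiv.swap_mul_self]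
    rfl
  · rw [show (3:ℕ) = 2+1 from rfl, pow_succ, pow_two, PhiG, PhiG]
    simp only [mk_mul, gact_mul, gact_add, gact_Gam]
    simp only [Equiv.Perm.mul_apply, Equiv.swap_apply_left, Equiv.swap_apply_right,
      Equiv.swap_apply_of_ne_of_ne, hi, hj, hk, hij, hik, hjk, h0i, h0j, h0k, hji, hki, hkj,
      ne_eq, not_false_eq_true]
    refine SemidirectProduct.ext ?_ ?_
    · rw [SemidirectProduct.one_left, ofAdd_eq_one]
      exact z3 (Gam 0 i) (Gam i j) (Gam j 0)
    · rw [SemidirectProduct.one_right]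
      ext v
      simp only [Equiv.Perm.mul_apply, Equiv.Perm.one_apply]
      by_cases hv0 : v = 0 <;> by_cases hvi : v = i <;> by_cases hvj : v = j <;>
        simp_all [Equiv.swap_apply_of_ne_of_ne, Equiv.swap_apply_left, Equiv.swap_apply_right]
  · rw [pow_two, PhiG, PhiG, PhiG]
    simp only [mk_mul, gact_mul, gact_add, gact_Gam]
    simp only [Equiv.Perm.mul_apply, Equiv.swap_apply_left, Equiv.swap_apply_right,
      Equiv.swap_apply_of_ne_of_ne, hi, hj, hk, hij, hik, hjk, h0i, h0j, h0k, hji, hki, hkj,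
      ne_eq, not_false_eq_true]
    refine SemidirectProduct.ext ?_ ?_
    · show Multiplicative.ofAdd _ = Multiplicative.ofAdd _
      apply congrArg
      funext e
      show Gam 0 i e + Gam i j e + Gam j 0 e + Gam 0 k e +
          (Gam k j e + Gam j i e + Gam i k e + Gam k 0 e)
        = single 0 i e + single i k e + single k j e + single j 0 e
      rw [single_apply 0 i h0i, single_apply i k hik, single_apply k j hkj, single_apply j 0 hj]
      simp only [Gam]
      by_cases e0 : (0:Vtx n) ∈ e.1 <;> by_cases ei : i ∈ e.1 <;> by_cases ej : j ∈ e.1 <;>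
        by_cases ek : k ∈ e.1 <;> simp [e0, ei, ej, ek] <;> decide
    · show _ = (1 : Perm (Vtx n))
      ext v
      simp only [Equiv.Perm.mul_apply, Equiv.Perm.one_apply]
      by_cases hv0 : v = 0 <;> by_cases hvi : v = i <;> by_cases hvj : v = j <;>
        by_cases hvk : v = k <;>
        simp_all [Equiv.swap_apply_of_ne_of_ne, Equiv.swap_apply_left, Equiv.swap_apply_right]
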